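/- Let G be a finite simple graph, A ⊊ V(G) the vertex set of an anchor H = G[A], and suppose B ⊆ V(G) − A is such that the multiset of shadows {N(b) ∩ A : b ∈ B} is a shadow anchor: for every B' ⊆ V(G) − A with B' ≠ B, there is no automorphism φ of H with {φ(N(b) ∩ A) : b ∈ B} = {N(b') ∩ A : b' ∈ B'} (as multisets) together with G[B] ≅ G[B'] compatibly extending to an isomorphism of G[A ∪ B] and G[A ∪ B']. Then, if A ∪ B ≠ V(G), the induced subgraph G[A ∪ B] is an anchor of G. -/

import Mathlib

/-- `A` is the vertex set of an anchor of `G`: a nonempty proper vertex subset such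
that `A` is the unique vertex subset of `G` inducing a subgraph isomorphic to `G[A]`. -/
def IsAnchor {V : Type*} (G : SimpleGraph V) (A : Set V) : Prop :=
  A.Nonempty ∧ A ≠ Set.univ ∧
    ∀ S : Set V, Nonempty (G.induce S ≃g G.induce A) → S = A

/-- Anchor extension via a shadow anchor: let `G[A]` be an anchor of `G` and
`B ⊆ V(G) − A` a set whose multiset of shadows on `A` is a shadow anchor, in the sense
that for every `B' ⊆ V(G) − A` with `B' ≠ B` no automorphism `φ` of `G[A]` maps the
shadows of the vertices of `B` (matched by some bijection `β : B ≃ B'`) onto the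
shadows of the vertices of `B'`. Then, if `A ∪ B ≠ V(G)`, the induced subgraph
`G[A ∪ B]` is an anchor of `G`. -/
theorem anchor_extend_shadow_anchor {V : Type*} [Fintype V] (G : SimpleGraph V)
    (A B : Set V) (hA : IsAnchor G A) (hB : B ⊆ Aᶜ)
    (hshadow : ∀ B' : Set V, B' ⊆ Aᶜ → B' ≠ B →
      ∀ φ : G.induce A ≃g G.induce A,
        ¬ ∃ β : ↥B ≃ ↥B', ∀ b : ↥B,
          ⇑φ '' {a : ↥A | G.Adj (b : V) (a : V)} = {a : ↥A | G.Adj ((β b : ↥B') : V) (a : V)})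
    (hu : A ∪ B ≠ Set.univ) :
    IsAnchor G (A ∪ B) := by
  classical
  obtain ⟨hAne, hAuniv, hAuniq⟩ := hA
  refine ⟨hAne.mono Set.subset_union_left, hu, ?_⟩
  rintro S ⟨ψ⟩
  set A' : Set V := {v | ∃ h : v ∈ S, ((ψ ⟨v, h⟩ : ↥(A ∪ B)) : V) ∈ A} with hA'def
  have hA'S : A' ⊆ S := fun v hv => hv.choose
  have key : ∀ v (h : v ∈ S), v ∈ A' ↔ ((ψ ⟨v, h⟩ : ↥(A ∪ B)) : V) ∈ A := by
    intro v h
    constructor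
    · rintro ⟨h', hh⟩; exact hh
    · intro hh; exact ⟨h, hh⟩
  let e : G.induce A' ≃g G.induce A :=
    { toFun := fun v => ⟨(ψ ⟨v.1, hA'S v.2⟩ : ↥(A ∪ B)), (key v.1 (hA'S v.2)).1 v.2⟩
      invFun := fun a => ⟨(ψ.symm ⟨a.1, Or.inl a.2⟩ : ↥S),
        (key _ (ψ.symm ⟨a.1, Or.inl a.2⟩).2).2 (by simp)⟩
      left_inv := fun v => by
        apply Subtype.ext
        simp
        exact congrArg Subtype.val (ψ.symm_apply_apply _)
      right_inv := fun a => by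
        apply Subtype.ext
        simp
      map_rel_iff' := ψ.map_rel_iff }
  have hAA' : A' = A := hAuniq A' ⟨e⟩
  have hAS : A ⊆ S := hAA' ▸ hA'S
  have hmemA : ∀ (a : V) (h : a ∈ A), ((ψ ⟨a, hAS h⟩ : ↥(A ∪ B)) : V) ∈ A := by
    intro a h
    exact (key a (hAS h)).1 (hAA'.symm.subset h)
  -- φ₀ : restriction of ψ to A
  let φ₀ : G.induce A ≃g G.induce A :=
    { toFun := fun a => ⟨(ψ ⟨a.1, hAS a.2⟩ : ↥(A ∪ B)), hmemA a.1 a.2⟩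
      invFun := fun a => ⟨(ψ.symm ⟨a.1, Or.inl a.2⟩ : ↥S),
        hAA'.subset ((key _ (ψ.symm ⟨a.1, Or.inl a.2⟩).2).2 (by simp))⟩
      left_inv := fun a => by apply Subtype.ext; simp; exact congrArg Subtype.val (ψ.symm_apply_apply _)
      right_inv := fun a => by apply Subtype.ext; simp
      map_rel_iff' := ψ.map_rel_iff }
  have hB'sub : S \ A ⊆ Aᶜ := fun v hv => hv.2
  have hmemB : ∀ (s : V) (h : s ∈ S \ A), ((ψ ⟨s, h.1⟩ : ↥(A ∪ B)) : V) ∈ B := by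
    intro s h
    rcases (ψ ⟨s, h.1⟩).2 with hmem | hmem
    · exact absurd (hAA'.subset ((key s h.1).2 hmem)) h.2
    · exact hmem
  have hmemB' : ∀ (b : V) (h : b ∈ B), ((ψ.symm ⟨b, Or.inr h⟩ : ↥S) : V) ∈ S \ A := by
    intro b h
    refine ⟨(ψ.symm ⟨b, Or.inr h⟩).2, fun hA' => ?_⟩
    have := (key _ (ψ.symm ⟨b, Or.inr h⟩).2).1 (hAA'.symm.subset hA')
    simp at this
    exact hB h this
  let β : ↥B ≃ ↥(S \ A) :=
    { toFun := fun b => ⟨(ψ.symm ⟨b.1, Or.inr b.2⟩ : ↥S), hmemB' b.1 b.2⟩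
      invFun := fun b' => ⟨(ψ ⟨b'.1, b'.2.1⟩ : ↥(A ∪ B)), hmemB b'.1 b'.2⟩
      left_inv := fun b => by apply Subtype.ext; simp
      right_inv := fun b' => by apply Subtype.ext; simp; exact congrArg Subtype.val (ψ.symm_apply_apply _) }
  have hiff : ∀ (b : ↥B) (a : ↥A),
      G.Adj ((β b : ↥(S \ A)) : V) (a : V) ↔ G.Adj (b : V) ((φ₀ a : ↥A) : V) := by
    intro b a
    have h1 := ψ.symm.map_rel_iff (a := (⟨b.1, Or.inr b.2⟩ : ↥(A ∪ B)))
      (b := ψ ⟨a.1, hAS a.2⟩)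
    rw [RelIso.symm_apply_apply] at h1
    exact h1
  have hBB' : S \ A = B := by
    by_contra hne
    refine hshadow (S \ A) hB'sub hne φ₀.symm ⟨β, fun b => ?_⟩
    ext a
    simp only [Set.mem_image, Set.mem_setOf_eq]
    constructor
    · rintro ⟨x, hx, rfl⟩
      refine (hiff b _).mpr ?_
      rwa [RelIso.apply_symm_apply]
    · intro ha
      exact ⟨φ₀ a, (hiff b a).mp ha, φ₀.symm_apply_apply a⟩
  calc S = A ∪ (S \ A) := (Set.union_diff_cancel hAS).symm
    _ = A ∪ B := by rw [hBB']
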